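/- Let s > 0 be real with ∑_{k=1}^∞ exp(−s√(k(k+2))/2) < 1/2 (equivalently s > γ̃_M). Then the function a ↦ N_≤(a)·e^{−sa} is integrable on [0,∞) and ∫_0^∞ N_≤(a) e^{−sa} da = (1/s)·( (1 − 2∑_{k=1}^∞ e^{−s√(k(k+2))/2})^{−1} − 1 ). -/

import Mathlib

open MeasureTheory

/-- The weight of an entry `j : ℤ` encoding the nonzero half-integer `m = j/2`:
`√(|m|(|m|+1)) = √(|j|(|j|+2))/2`. -/
noncomputable def wt (j : ℤ) : ℝ := Real.sqrt (|(j : ℝ)| * (|(j : ℝ)| + 2)) / 2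

/-- The set of `a`-admissible sequences: nonempty lists of nonzero half-integers
`mᵢ = jᵢ/2` with `∑ᵢ √(|mᵢ|(|mᵢ|+1)) ≤ a`. -/
def adm (a : ℝ) : Set (List ℤ) :=
  {l | l ≠ [] ∧ (∀ j ∈ l, j ≠ 0) ∧ (l.map wt).sum ≤ a}

/-- `N_≤(a)`, the number of `a`-admissible sequences. -/
noncomputable def Nle (a : ℝ) : ℕ := Nat.card (adm a)

open Real Set Filter
open scoped ENNReal Topology

section Aux

abbrev NZ := {j : ℤ // j ≠ 0}

noncomputable def Wn (l : List NZ) : ℝ := (l.map fun j => wt j.val).sum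

abbrev Lam := {l : List NZ // l ≠ []}

noncomputable def gE (s : ℝ) (j : NZ) : ℝ≥0∞ := ENNReal.ofReal (Real.exp (-(s * wt j.1)))

noncomputable def GE (s : ℝ) (l : List NZ) : ℝ≥0∞ := ENNReal.ofReal (Real.exp (-(s * Wn l)))

lemma wt_nonneg (j : ℤ) : 0 ≤ wt j := by unfold wt; positivity

lemma wt_ge (j : ℤ) (h : j ≠ 0) : Real.sqrt 3 / 2 ≤ wt j := by
  unfold wt
  have h1 : (1:ℝ) ≤ |(j:ℝ)| := by
    rw [← Int.cast_abs]; exact_mod_cast Int.one_le_abs (by omega)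
  gcongr
  nlinarith

lemma abs_le_two_wt (j : ℤ) : |(j:ℝ)| ≤ 2 * wt j := by
  unfold wt
  have h0 : 0 ≤ |(j:ℝ)| := abs_nonneg _
  have : |(j:ℝ)| = Real.sqrt (|(j:ℝ)|^2) := (Real.sqrt_sq h0).symm
  rw [this]
  rw [mul_div_cancel₀ _ (by norm_num : (2:ℝ) ≠ 0)]
  gcongr
  nlinarith

lemma Wn_nonneg (l : List NZ) : 0 ≤ Wn l :=
  List.sum_nonneg (by
    rintro x hx; simp only [List.mem_map] at hx; obtain ⟨j,_,rfl⟩ := hx; exact wt_nonneg _)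

lemma adm_finite (a : ℝ) : (adm a).Finite := by
  classical
  set K : Set ℤ := {j : ℤ | wt j ≤ a} with hK
  have hKfin : K.Finite := by
    apply (Set.finite_Icc (-(⌈2*a⌉)) ⌈2*a⌉).subset
    intro j hj
    have h1 : |(j:ℝ)| ≤ 2*a := le_trans (abs_le_two_wt j) (by nlinarith [hj.out])
    have h2 : |j| ≤ ⌈2*a⌉ := by
      have : ((|j| : ℤ) : ℝ) ≤ ((⌈2*a⌉ : ℤ) : ℝ) := by
        rw [Int.cast_abs]; exact h1.trans (Int.le_ceil _)
      exact_mod_cast this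
    simpa [Set.mem_Icc] using abs_le.mp h2
  haveI : Finite K := hKfin.to_subtype
  set N : ℕ := ⌈a / (Real.sqrt 3 / 2)⌉₊ with hN
  have hfin2 : ({l : List K | l.length ≤ N}).Finite := List.finite_length_le K N
  apply ((hfin2.image (fun l : List K => l.map Subtype.val))).subset
  rintro l ⟨hne, hnz, hle⟩
  have hnn : ∀ x ∈ l.map wt, 0 ≤ x := by
    rintro x hx; simp only [List.mem_map] at hx; obtain ⟨j,_,rfl⟩ := hx; exact wt_nonneg _
  have hmemK : ∀ j ∈ l, j ∈ K := by
    intro j hj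
    exact le_trans (List.single_le_sum hnn _ (List.mem_map_of_mem (f := wt) hj)) hle
  refine ⟨l.pmap (fun j h => (⟨j, h⟩ : K)) hmemK, ?_, ?_⟩
  · have hlen : ((l.length : ℝ)) * (Real.sqrt 3 / 2) ≤ a := by
      have := List.card_nsmul_le_sum (l.map wt) (Real.sqrt 3 / 2) (by
        rintro x hx; simp only [List.mem_map] at hx; obtain ⟨j,hj,rfl⟩ := hx
        exact wt_ge j (hnz j hj))
      simp only [List.length_map, nsmul_eq_mul] at this
      exact this.trans hle
    have hs3 : (0:ℝ) < Real.sqrt 3 / 2 := by positivity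
    have : (l.length : ℝ) ≤ a / (Real.sqrt 3 / 2) := by
      rw [le_div_iff₀ hs3]; exact hlen
    simp only [Set.mem_setOf_eq, List.length_pmap]
    exact_mod_cast (Nat.cast_le (α := ℝ)).mp (this.trans (Nat.le_ceil _))
  · simp [List.map_pmap, List.pmap_eq_map]

lemma W_map_val (l : List NZ) : ((l.map Subtype.val).map wt).sum = Wn l := by
  simp [Wn, List.map_map]

noncomputable def admEquiv (a : ℝ) : {l : Lam // Wn l.1 ≤ a} ≃ adm a where
  toFun x := ⟨x.1.1.map Subtype.val,
    ⟨fun h => x.1.2 (by simpa using List.map_eq_nil_iff.mp h), fun j hj => by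
        simp only [List.mem_map] at hj; obtain ⟨⟨j', hj'⟩, _, rfl⟩ := hj; exact hj',
      by rw [W_map_val]; exact x.2⟩⟩
  invFun y := ⟨⟨y.1.pmap (fun j h => (⟨j, h⟩ : NZ)) y.2.2.1,
      by simpa [List.pmap_eq_nil_iff] using y.2.1⟩,
    by
      have : Wn (y.1.pmap (fun j h => (⟨j, h⟩ : NZ)) y.2.2.1) = (y.1.map wt).sum := by
        simp [Wn, List.map_pmap, List.pmap_eq_map]
      rw [this]; exact y.2.2.2⟩
  left_inv x := by
    apply Subtype.ext; apply Subtype.ext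
    simp only
    rw [List.pmap_map]
    exact (List.pmap_eq_map _).trans (List.map_id _)
  right_inv y := by
    apply Subtype.ext
    simp [List.map_pmap, List.pmap_eq_map]

lemma Nle_eq_card (a : ℝ) : Nle a = Nat.card {l : Lam // Wn l.1 ≤ a} :=
  (Nat.card_congr (admEquiv a)).symm

lemma Nle_eq_tsum (a : ℝ) :
    (Nle a : ℝ≥0∞) = ∑' l : Lam, (Set.Ici (Wn l.1)).indicator (fun _ => (1:ℝ≥0∞)) a := by
  classical
  have h1 : ∀ l : Lam, (Set.Ici (Wn l.1)).indicator (fun _ => (1:ℝ≥0∞)) a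
      = ({l : Lam | Wn l.1 ≤ a}).indicator (fun _ => (1:ℝ≥0∞)) l := by
    intro l
    by_cases h : Wn l.1 ≤ a
    · rw [Set.indicator_of_mem (by simpa using h), Set.indicator_of_mem (by simpa using h)]
    · rw [Set.indicator_of_notMem (by simpa using h), Set.indicator_of_notMem (by simpa using h)]
  rw [tsum_congr h1, ← tsum_subtype]
  haveI hfin : Finite {l : Lam // Wn l.1 ≤ a} := by
    haveI := (adm_finite a).to_subtype
    exact Finite.of_equiv _ (admEquiv a).symm
  haveI : Finite ↑{l : Lam | Wn l.1 ≤ a} := hfin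
  haveI inst : Fintype ↑{l : Lam | Wn l.1 ≤ a} := Fintype.ofFinite _
  haveI inst2 : Fintype {l : Lam // Wn l.1 ≤ a} := inst
  rw [tsum_fintype]
  have h2 : ∑ _x : ↑{l : Lam | Wn l.1 ≤ a}, (1:ℝ≥0∞)
      = ((Fintype.card ↑{l : Lam | Wn l.1 ≤ a} : ℕ) : ℝ≥0∞) := by simp
  rw [h2, Nle_eq_card a, Nat.card_eq_fintype_card (α := {l : Lam // Wn l.1 ≤ a})]
  norm_cast
  exact Fintype.card_congr (Equiv.refl _)

lemma GE_eq_prod (s : ℝ) (l : List NZ) : GE s l = (l.map (gE s)).prod := by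
  induction l with
  | nil => simp [GE, Wn]
  | cons j l ih =>
    have hW : Wn (j :: l) = wt j.1 + Wn l := by simp [Wn]
    simp only [GE] at ih ⊢
    rw [List.map_cons, List.prod_cons, ← ih]
    simp only [gE]
    rw [← ENNReal.ofReal_mul (Real.exp_nonneg _), ← Real.exp_add, hW]
    ring_nf

lemma tsum_pi_fin {β : Type*} (g : β → ℝ≥0∞) : ∀ n : ℕ,
    ∑' f : Fin n → β, ∏ i, g (f i) = (∑' b, g b) ^ n
  | 0 => by
    haveI : Unique (Fin 0 → β) := ⟨⟨Fin.elim0⟩, fun f => funext fun i => i.elim0⟩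
    rw [tsum_eq_single default (fun f hf => absurd (Unique.eq_default f) hf)]
    simp
  | (n+1) => by
    have he : ∀ p : β × (Fin n → β), ∏ i, g ((Fin.consEquiv fun _ : Fin (n+1) => β) p i)
        = g p.1 * ∏ i, g (p.2 i) := by
      rintro ⟨b, f⟩
      rw [Fin.prod_univ_succ]
      simp [Fin.consEquiv]
    rw [← (Fin.consEquiv fun _ : Fin (n+1) => β).tsum_eq, tsum_congr he, ENNReal.tsum_prod']
    simp only [ENNReal.tsum_mul_left, ENNReal.tsum_mul_right]
    rw [tsum_pi_fin g n, pow_succ, mul_comm]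

lemma tsum_GE (s : ℝ) : ∑' l : List NZ, GE s l = (1 - ∑' j, gE s j)⁻¹ := by
  rw [← (List.equivSigmaTuple (α := NZ)).symm.tsum_eq, ENNReal.tsum_sigma']
  have h : ∀ (n : ℕ) (f : Fin n → NZ), GE s ((List.equivSigmaTuple (α := NZ)).symm ⟨n, f⟩)
      = ∏ i, gE s (f i) := by
    intro n f
    have : (List.equivSigmaTuple (α := NZ)).symm ⟨n, f⟩ = List.ofFn f := rfl
    rw [this, GE_eq_prod, List.map_ofFn, List.prod_ofFn]
    rfl
  calc ∑' (n : ℕ) (f : Fin n → NZ), GE s ((List.equivSigmaTuple (α := NZ)).symm ⟨n, f⟩)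
      = ∑' (n : ℕ), (∑' j, gE s j) ^ n := by
        refine tsum_congr fun n => ?_
        rw [tsum_congr (h n), tsum_pi_fin]
    _ = (1 - ∑' j, gE s j)⁻¹ := ENNReal.tsum_geometric _

lemma tsum_GE_ne (s : ℝ) :
    (∑' l : Lam, GE s l.1) + 1 = (1 - ∑' j, gE s j)⁻¹ := by
  classical
  have h0 : GE s [] = 1 := by simp [GE, Wn]
  have h1 := ENNReal.tsum_eq_add_tsum_ite (f := GE s) ([] : List NZ)
  have h2 : (∑' l : Lam, GE s l.1) + 1 = ∑' l : List NZ, GE s l := by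
    rw [h1, h0, add_comm 1]
    congr 1
    have h3 := tsum_subtype {l : List NZ | l ≠ []} (GE s)
    exact h3.trans (tsum_congr fun l => by by_cases h : l = [] <;> simp [Set.indicator, h])
  rw [h2, tsum_GE]

lemma tsum_sum_ennreal {α β : Type u} (g : α ⊕ β → ℝ≥0∞) :
    ∑' x, g x = (∑' a, g (Sum.inl a)) + ∑' b, g (Sum.inr b) := by
  rw [← (Equiv.sumEquivSigmaBool α β).symm.tsum_eq, ENNReal.tsum_sigma']
  rw [tsum_fintype]
  simp [Equiv.sumEquivSigmaBool, add_comm]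

def nzEquiv : ℕ ⊕ ℕ ≃ NZ where
  toFun x := Sum.elim (fun k : ℕ => (⟨(k:ℤ)+1, by omega⟩ : NZ))
    (fun k : ℕ => (⟨-((k:ℤ)+1), by omega⟩ : NZ)) x
  invFun j := if 0 < j.1 then Sum.inl (j.1-1).toNat else Sum.inr (-j.1-1).toNat
  left_inv := by rintro (k|k) <;> simp <;> omega
  right_inv := by
    rintro ⟨j, hj⟩
    by_cases h : 0 < j <;> simp [h, Subtype.ext_iff] <;> omega

lemma wt_val (k : ℕ) : wt ((k:ℤ)+1) = Real.sqrt (((k:ℝ)+1) * (((k:ℝ)+1)+2)) / 2 := by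
  unfold wt
  have : |(((k:ℤ)+1 : ℤ) : ℝ)| = (k:ℝ)+1 := by
    push_cast; rw [abs_of_nonneg (by positivity)]
  rw [this]

lemma wt_val_neg (k : ℕ) : wt (-((k:ℤ)+1)) = Real.sqrt (((k:ℝ)+1) * (((k:ℝ)+1)+2)) / 2 := by
  unfold wt
  have : |((-((k:ℤ)+1) : ℤ) : ℝ)| = (k:ℝ)+1 := by
    push_cast; rw [abs_neg, abs_of_nonneg (by positivity)]
  rw [this]

lemma S_summable {s : ℝ} (hs : 0 < s) :
    Summable (fun k : ℕ => Real.exp (-(s * Real.sqrt (((k:ℝ)+1) * (((k:ℝ)+1)+2)) / 2))) := by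
  refine Summable.of_nonneg_of_le (fun k => (Real.exp_nonneg _)) (fun k => ?_)
    (summable_geometric_of_lt_one (le_of_lt (Real.exp_pos _))
      (Real.exp_lt_one_iff.mpr (by linarith) : Real.exp (-(s/2)) < 1))
  have hk : (k:ℝ) ≤ Real.sqrt (((k:ℝ)+1) * (((k:ℝ)+1)+2)) := by
    rw [Real.le_sqrt (Nat.cast_nonneg k) (by positivity)]
    nlinarith [Nat.cast_nonneg (α := ℝ) k]
  calc Real.exp (-(s * Real.sqrt (((k:ℝ)+1) * (((k:ℝ)+1)+2)) / 2))
      ≤ Real.exp (-(s * k / 2)) := by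
        apply Real.exp_le_exp.mpr
        have : s * (k:ℝ) ≤ s * Real.sqrt (((k:ℝ)+1) * (((k:ℝ)+1)+2)) :=
          mul_le_mul_of_nonneg_left hk (le_of_lt hs)
        linarith
    _ = Real.exp (-(s/2)) ^ k := by
        rw [← Real.exp_nat_mul]; ring_nf

lemma q_eq (s : ℝ) (hs : 0 < s)
    (S : ℝ) (hS : S = ∑' k : ℕ, Real.exp (-(s * Real.sqrt (((k:ℝ)+1) * (((k:ℝ)+1)+2)) / 2))) :
    ∑' j : NZ, gE s j = ENNReal.ofReal (2 * S) := by
  rw [← nzEquiv.tsum_eq, tsum_sum_ennreal]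
  have h1 : ∀ k : ℕ, gE s (nzEquiv (Sum.inl k))
      = ENNReal.ofReal (Real.exp (-(s * Real.sqrt (((k:ℝ)+1) * (((k:ℝ)+1)+2)) / 2))) := by
    intro k
    simp only [nzEquiv, gE, Sum.elim_inl, Equiv.coe_fn_mk]
    rw [wt_val]
    ring_nf
  have h2 : ∀ k : ℕ, gE s (nzEquiv (Sum.inr k))
      = ENNReal.ofReal (Real.exp (-(s * Real.sqrt (((k:ℝ)+1) * (((k:ℝ)+1)+2)) / 2))) := by
    intro k
    simp only [nzEquiv, gE, Sum.elim_inr, Equiv.coe_fn_mk]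
    rw [wt_val_neg]
    ring_nf
  rw [tsum_congr h1, tsum_congr h2,
    ← ENNReal.ofReal_tsum_of_nonneg (fun k => Real.exp_nonneg _) (S_summable hs),
    ← ENNReal.ofReal_add (tsum_nonneg fun k => Real.exp_nonneg _)
      (tsum_nonneg fun k => Real.exp_nonneg _), ← hS]
  congr 1
  ring

lemma real_int_exp {s : ℝ} (hs : 0 < s) (w : ℝ) :
    ∫ a in Set.Ioi w, Real.exp (-(s*a)) = Real.exp (-(s*w)) / s := by
  have hderiv : ∀ x ∈ Set.Ioi w, HasDerivAt (fun x => -(1/s) * Real.exp (-(s*x)))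
      (Real.exp (-(s*x))) x := by
    intro x _
    have h1 : HasDerivAt (fun x : ℝ => -(s*x)) (-s) x := by
      simpa using (hasDerivAt_id x).const_mul (-s)
    have h2 := (Real.hasDerivAt_exp (-(s*x))).comp x h1
    have h3 := h2.const_mul (-(1/s))
    refine h3.congr_deriv ?_
    have hs' : s ≠ 0 := hs.ne'
    field_simp
  have hint : IntegrableOn (fun x => Real.exp (-(s*x))) (Set.Ioi w) := by
    simpa [neg_mul] using exp_neg_integrableOn_Ioi w hs
  have htend : Tendsto (fun x => -(1/s) * Real.exp (-(s*x))) atTop (𝓝 0) := by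
    have h4 : Tendsto (fun x : ℝ => s*x) atTop atTop :=
      Tendsto.const_mul_atTop hs tendsto_id
    have h5 : Tendsto (fun x : ℝ => Real.exp (-(s*x))) atTop (𝓝 0) :=
      Real.tendsto_exp_neg_atTop_nhds_zero.comp h4
    simpa using h5.const_mul (-(1/s))
  have hcont : ContinuousWithinAt (fun x => -(1/s) * Real.exp (-(s*x))) (Set.Ici w) w :=
    (Continuous.continuousWithinAt (by continuity))
  rw [integral_Ioi_of_hasDerivAt_of_tendsto hcont hderiv hint htend]
  ring

lemma lint_exp {s : ℝ} (hs : 0 < s) (w : ℝ) :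
    ∫⁻ a in Set.Ici w, ENNReal.ofReal (Real.exp (-(s*a)))
      = ENNReal.ofReal (Real.exp (-(s*w)) / s) := by
  rw [← restrict_Ioi_eq_restrict_Ici,
    ← ofReal_integral_eq_lintegral_ofReal
      (by simpa [IntegrableOn, neg_mul] using exp_neg_integrableOn_Ioi w hs)
      (Filter.Eventually.of_forall fun x => Real.exp_nonneg _),
    real_int_exp hs w]

lemma main_lint {s : ℝ} (hs : 0 < s) :
    ∫⁻ a in Set.Ici (0:ℝ), (Nle a : ℝ≥0∞) * ENNReal.ofReal (Real.exp (-(s*a)))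
      = (∑' l : Lam, GE s l.1) * ENNReal.ofReal (1/s) := by
  have step1 : ∀ a : ℝ, (Nle a : ℝ≥0∞) * ENNReal.ofReal (Real.exp (-(s*a)))
      = ∑' l : Lam, (Set.Ici (Wn l.1)).indicator
          (fun x => ENNReal.ofReal (Real.exp (-(s*x)))) a := by
    intro a
    rw [Nle_eq_tsum, ← ENNReal.tsum_mul_right]
    refine tsum_congr fun l => ?_
    by_cases h : Wn l.1 ≤ a
    · rw [Set.indicator_of_mem (by simpa using h), Set.indicator_of_mem (by simpa using h)]
      simp
    · rw [Set.indicator_of_notMem (by simpa using h),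
        Set.indicator_of_notMem (by simpa using h)]
      simp
  rw [lintegral_congr step1]
  rw [lintegral_tsum (fun l => (Measurable.indicator
    (Measurable.ennreal_ofReal
      (by continuity : Continuous fun x : ℝ => Real.exp (-(s*x))).measurable)
    measurableSet_Ici).aemeasurable)]
  have step2 : ∀ l : Lam, ∫⁻ a in Set.Ici (0:ℝ), (Set.Ici (Wn l.1)).indicator
      (fun x => ENNReal.ofReal (Real.exp (-(s*x)))) a = GE s l.1 * ENNReal.ofReal (1/s) := by
    intro l
    rw [lintegral_indicator measurableSet_Ici, Measure.restrict_restrict measurableSet_Ici,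
      Set.inter_eq_left.mpr (Set.Ici_subset_Ici.mpr (Wn_nonneg l.1)), lint_exp hs]
    rw [div_eq_mul_inv, ENNReal.ofReal_mul (Real.exp_nonneg _), GE]
    congr 1
    rw [one_div]
  rw [tsum_congr step2, ENNReal.tsum_mul_right]

end Aux

/-- for real `s > 0` with `∑_{k≥1} exp(-s√(k(k+2))/2) < 1/2`, the function
`a ↦ N_≤(a)e^{-sa}` is integrable on `[0,∞)` and its integral (the Laplace transform of
`N_≤`) equals `(1/s)((1 - 2∑_{k≥1} e^{-s√(k(k+2))/2})⁻¹ - 1)`. -/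
theorem stmt_5 (s : ℝ) (hs : 0 < s)
    (hsum : ∑' k : ℕ,
        Real.exp (-(s * Real.sqrt (((k : ℝ) + 1) * (((k : ℝ) + 1) + 2)) / 2)) < 1 / 2) :
    IntegrableOn (fun a : ℝ => (Nle a : ℝ) * Real.exp (-(s * a))) (Set.Ici 0) ∧
    ∫ a in Set.Ici (0 : ℝ), (Nle a : ℝ) * Real.exp (-(s * a)) =
      (1 / s) * ((1 - 2 * ∑' k : ℕ,
          Real.exp (-(s * Real.sqrt (((k : ℝ) + 1) * (((k : ℝ) + 1) + 2)) / 2)))⁻¹ - 1) := by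
  set S : ℝ := ∑' k : ℕ,
      Real.exp (-(s * Real.sqrt (((k : ℝ) + 1) * (((k : ℝ) + 1) + 2)) / 2)) with hSdef
  have hS0 : 0 ≤ S := tsum_nonneg fun k => Real.exp_nonneg _
  have hS : S < 1/2 := hsum
  have h2S : (0:ℝ) ≤ 2*S := by linarith
  have hpos : (0:ℝ) < 1 - 2*S := by linarith
  set q : ℝ≥0∞ := ∑' j : NZ, gE s j with hqdef
  have hq : q = ENNReal.ofReal (2*S) := q_eq s hs S hSdef
  have hq1 : q < 1 := by
    rw [hq]
    calc ENNReal.ofReal (2*S) < ENNReal.ofReal 1 :=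
          (ENNReal.ofReal_lt_ofReal_iff (by norm_num)).mpr (by linarith)
      _ = 1 := ENNReal.ofReal_one
  have h1q_ne : (1 - q) ≠ 0 := (tsub_pos_of_lt hq1).ne'
  have hinv_ne_top : (1-q)⁻¹ ≠ ⊤ := ENNReal.inv_ne_top.mpr h1q_ne
  set T : ℝ≥0∞ := ∑' l : Lam, GE s l.1 with hTdef
  have hT : T + 1 = (1-q)⁻¹ := tsum_GE_ne s
  have hT_ne_top : T ≠ ⊤ := by
    refine ne_top_of_le_ne_top hinv_ne_top ?_
    rw [← hT]; exact le_self_add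
  have hTval : T = (1-q)⁻¹ - 1 := ENNReal.eq_sub_of_add_eq ENNReal.one_ne_top hT
  have hone_le : (1:ℝ) ≤ (1-2*S)⁻¹ := (one_le_inv₀ hpos).mpr (by linarith)
  have h1q : (1 : ℝ≥0∞) - q = ENNReal.ofReal (1 - 2*S) := by
    rw [hq, ENNReal.ofReal_sub _ h2S, ENNReal.ofReal_one]
  have hTreal : T = ENNReal.ofReal ((1-2*S)⁻¹ - 1) := by
    rw [hTval, h1q, ← ENNReal.ofReal_inv_of_pos hpos,
      ENNReal.ofReal_sub _ (by norm_num : (0:ℝ) ≤ 1), ENNReal.ofReal_one]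
  have hmono : Monotone fun a : ℝ => Nle a := by
    intro a b hab
    exact Nat.card_mono (adm_finite b) (fun l hl => ⟨hl.1, hl.2.1, hl.2.2.trans hab⟩)
  have hmono2 : Monotone fun a : ℝ => ((Nle a : ℕ) : ℝ) := fun a b hab =>
    Nat.cast_le.mpr (hmono hab)
  have hfn_meas : Measurable fun a : ℝ => (Nle a : ℝ) * Real.exp (-(s * a)) :=
    hmono2.measurable.mul (by continuity : Continuous fun a : ℝ => Real.exp (-(s*a))).measurable
  have hae : 0 ≤ᵐ[volume.restrict (Set.Ici (0:ℝ))]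
      fun a : ℝ => (Nle a : ℝ) * Real.exp (-(s * a)) :=
    Filter.Eventually.of_forall fun a => mul_nonneg (Nat.cast_nonneg _) (Real.exp_nonneg _)
  have hofReal : ∀ a : ℝ, ENNReal.ofReal ((Nle a : ℝ) * Real.exp (-(s*a)))
      = (Nle a : ℝ≥0∞) * ENNReal.ofReal (Real.exp (-(s*a))) := by
    intro a
    rw [ENNReal.ofReal_mul (Nat.cast_nonneg _), ENNReal.ofReal_natCast]
  have hlint : ∫⁻ a in Set.Ici (0:ℝ), ENNReal.ofReal ((Nle a : ℝ) * Real.exp (-(s*a)))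
      = T * ENNReal.ofReal (1/s) := by
    rw [lintegral_congr fun a => hofReal a]
    exact main_lint hs
  have hI_ne_top : T * ENNReal.ofReal (1/s) ≠ ⊤ :=
    ENNReal.mul_ne_top hT_ne_top ENNReal.ofReal_ne_top
  have hint : IntegrableOn (fun a : ℝ => (Nle a : ℝ) * Real.exp (-(s * a))) (Set.Ici 0) := by
    refine ⟨hfn_meas.aestronglyMeasurable, ?_⟩
    rw [hasFiniteIntegral_iff_ofReal hae]
    rw [hlint]
    exact hI_ne_top.lt_top
  refine ⟨hint, ?_⟩
  rw [integral_eq_lintegral_of_nonneg_ae hae hfn_meas.aestronglyMeasurable, hlint, hTreal,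
    ← ENNReal.ofReal_mul (by linarith), ENNReal.toReal_ofReal (mul_nonneg (by linarith) (by positivity))]
  ring
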